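/- arXiv:2403.18388 — 3 statements merged into one kernel-verified Lean document; each statement's English description precedes it below -/
import Mathlib

section
/- Consider an IF neuron with soft reset, threshold θ > 0, constant input I per time step with 0 ≤ I ≤ θ, and v[0] = 0. Then for every t ≥ 0 the membrane potential satisfies 0 ≤ v[t] < θ, and the cumulative spike count satisfies Σ_{k=1}^{T} s[k] = ⌊T·I/θ⌋ for all T ≥ 1. -/
/-- Constant-input soft-reset IF neuron: the membrane potential stays in `[0, θ)` and the
cumulative spike count up to time `T` equals `⌊T·I/θ⌋`. -/
theorem if_neuron_constant_input (v s : ℕ → ℝ) (I θ : ℝ) (hθ : 0 < θ)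
    (hI0 : 0 ≤ I) (hIθ : I ≤ θ) (hv0 : v 0 = 0)
    (hspike : ∀ t, s (t + 1) = if θ ≤ v t + I then 1 else 0)
    (hdyn : ∀ t, v (t + 1) = v t + I - θ * s (t + 1)) :
    (∀ t, 0 ≤ v t ∧ v t < θ) ∧
    (∀ T : ℕ, 1 ≤ T →
      ∑ k ∈ Finset.Icc 1 T, s k = (⌊(T : ℝ) * I / θ⌋ : ℝ)) := by
  have hθ' : θ ≠ 0 := ne_of_gt hθ
  have hc0 : 0 ≤ I / θ := div_nonneg hI0 hθ.le
  have hc1 : I / θ ≤ 1 := (div_le_one hθ).2 hIθ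
  -- key formula
  have key : ∀ t : ℕ, v t = θ * Int.fract ((t : ℝ) * I / θ) := by
    intro t
    induction t with
    | zero => simp [hv0]
    | succ t ih =>
      have hx : ((t + 1 : ℕ) : ℝ) * I / θ = (t : ℝ) * I / θ + I / θ := by
        push_cast; ring
      set u : ℝ := Int.fract ((t : ℝ) * I / θ) with hu
      have hu0 : 0 ≤ u := Int.fract_nonneg _
      have hu1 : u < 1 := Int.fract_lt_one _
      have hfr : Int.fract (((t + 1 : ℕ) : ℝ) * I / θ) = Int.fract (u + I / θ) := by
        rw [hx, hu]
        conv_lhs => rw [show (t : ℝ) * I / θ = (⌊(t : ℝ) * I / θ⌋ : ℝ) + Int.fract ((t : ℝ) * I / θ) by rw [Int.floor_add_fract]]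
        rw [add_assoc, Int.fract_intCast_add]
      rw [hdyn t, hspike t, ih, hfr]
      by_cases h : θ ≤ θ * u + I
      · have h1 : (1 : ℝ) ≤ u + I / θ := by
          rw [← sub_nonneg] at h ⊢
          have : u + I / θ - 1 = (θ * u + I - θ) / θ := by field_simp
          rw [this]; exact div_nonneg h hθ.le
        have h2 : u + I / θ - 1 < 1 := by nlinarith
        have : Int.fract (u + I / θ) = u + I / θ - 1 := by
          rw [show u + I / θ = (u + I / θ - 1) + (1 : ℤ) by push_cast; ring,
            Int.fract_add_intCast, Int.fract_eq_self.2 ⟨by linarith, h2⟩]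
          push_cast; ring
        rw [if_pos h, this]; field_simp
      · push_neg at h
        have h1 : u + I / θ < 1 := by
          rw [← sub_neg] at h ⊢
          have : u + I / θ - 1 = (θ * u + I - θ) / θ := by field_simp
          rw [this]; exact div_neg_of_neg_of_pos h hθ
        have : Int.fract (u + I / θ) = u + I / θ :=
          Int.fract_eq_self.2 ⟨by linarith, h1⟩
        rw [if_neg (not_le.2 h), this]; field_simp; ring
  constructor
  · intro t
    rw [key t]
    constructor
    · exact mul_nonneg hθ.le (Int.fract_nonneg _)
    · nlinarith [Int.fract_lt_one ((t : ℝ) * I / θ), Int.fract_nonneg ((t : ℝ) * I / θ)]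
  · have main : ∀ T : ℕ, ∑ k ∈ Finset.Icc 1 T, s k = (⌊(T : ℝ) * I / θ⌋ : ℝ) := by
      intro T
      induction T with
      | zero => simp
      | succ T ih =>
        rw [Finset.sum_Icc_succ_top (by omega : 1 ≤ T + 1), ih]
        have hs : s (T + 1) = (v T + I - v (T + 1)) / θ := by
          rw [hdyn T]; field_simp; ring
        rw [hs, key T, key (T + 1), Int.fract, Int.fract]
        push_cast
        field_simp
        ring
    intro T _; exact main T
end

section
/- Under the hypotheses of the constant-input IF neuron (v[0]=0, 0 ≤ I ≤ θ, soft reset), the firing rate converges: (θ/T)·Σ_{t=1}^{T} s[t] → I as T → ∞. -/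
/-- Constant-input soft-reset IF neuron: the firing rate `(θ/T)·Σ_{t=1}^T s[t]` converges
to the input `I` as `T → ∞`. -/
theorem if_neuron_rate_tendsto (v s : ℕ → ℝ) (I θ : ℝ) (hθ : 0 < θ)
    (hI0 : 0 ≤ I) (hIθ : I ≤ θ) (hv0 : v 0 = 0)
    (hspike : ∀ t, s (t + 1) = if θ ≤ v t + I then 1 else 0)
    (hdyn : ∀ t, v (t + 1) = v t + I - θ * s (t + 1)) :
    Filter.Tendsto (fun T : ℕ => (θ / T) * ∑ t ∈ Finset.Icc 1 T, s t)
      Filter.atTop (nhds I) := by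
  have hinv : ∀ t, 0 ≤ v t ∧ v t < θ := by
    intro t
    induction t with
    | zero => exact ⟨le_of_eq hv0.symm, hv0 ▸ hθ⟩
    | succ n ih =>
      rw [hdyn n, hspike n]
      by_cases h : θ ≤ v n + I
      · simp only [if_pos h]
        constructor <;> nlinarith [ih.1, ih.2]
      · simp only [if_neg h]
        push_neg at h
        constructor <;> nlinarith [ih.1]
  have hsum : ∀ T : ℕ, θ * ∑ t ∈ Finset.Icc 1 T, s t = T * I - v T := by
    intro T
    induction T with
    | zero => simp [hv0]
    | succ n ih =>
      rw [Finset.sum_Icc_succ_top (by omega), mul_add, ih, hdyn n]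
      push_cast; ring
  have hv0' : Filter.Tendsto (fun T : ℕ => v T / T) Filter.atTop (nhds 0) := by
    apply squeeze_zero' (g := fun T : ℕ => θ / T)
    · filter_upwards [Filter.eventually_ge_atTop 1] with T hT
      have : (0:ℝ) < T := by exact_mod_cast hT
      exact div_nonneg (hinv T).1 (le_of_lt this)
    · filter_upwards [Filter.eventually_ge_atTop 1] with T hT
      have hT' : (0:ℝ) < T := by exact_mod_cast hT
      exact div_le_div_of_nonneg_right (le_of_lt (hinv T).2) hT'.le
    · exact tendsto_const_div_atTop_nhds_zero_nat θ
  have h2 : Filter.Tendsto (fun T : ℕ => I - v T / T) Filter.atTop (nhds I) := by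
    have := (tendsto_const_nhds (x := I) (f := Filter.atTop (α := ℕ))).sub hv0'
    simpa using this
  refine h2.congr' ?_
  filter_upwards [Filter.eventually_ge_atTop 1] with T hT
  have hT' : (T:ℝ) ≠ 0 := by
    exact Nat.cast_ne_zero.mpr (by omega)
  have := hsum T
  field_simp
  linarith [hsum T]
end

section
/- Let f : ℝ → [0,1] be nondecreasing and continuous with lim_{b→−∞} f(b) = 0 and lim_{b→+∞} f(b) = 1 (e.g., f(b) = E[H(X+b−1)] for X with continuous compactly supported distribution). For α ∈ (0,1) and step size 0 < c, the iteration b_{i+1} = b_i + c(α − f(b_i)) produces a bounded sequence (b_i). -/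
/-- Boundedness of the forward calibration iteration for a continuous nondecreasing
`f : ℝ → [0,1]` with limits `0` at `-∞` and `1` at `+∞`. -/
theorem ftbc_iteration_bounded (f : ℝ → ℝ)
    (hmono : Monotone f) (hcont : Continuous f)
    (hrange : ∀ x, f x ∈ Set.Icc (0:ℝ) 1)
    (hbot : Filter.Tendsto f Filter.atBot (nhds 0))
    (htop : Filter.Tendsto f Filter.atTop (nhds 1))
    (α : ℝ) (hα : α ∈ Set.Ioo (0:ℝ) 1)
    (c : ℝ) (hc : 0 < c)
    (b : ℕ → ℝ)
    (hiter : ∀ i, b (i + 1) = b i + c * (α - f (b i))) :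
    ∃ M : ℝ, ∀ i, |b i| ≤ M := by
  obtain ⟨L, hL⟩ := Filter.eventually_atBot.mp (hbot.eventually (gt_mem_nhds hα.1))
  obtain ⟨U, hU⟩ := Filter.eventually_atTop.mp (htop.eventually (lt_mem_nhds hα.2))
  -- step size bound
  have hstep : ∀ i, |b (i + 1) - b i| ≤ c := by
    intro i
    rw [hiter i]
    have h1 := (hrange (b i)).1
    have h2 := (hrange (b i)).2
    have : |α - f (b i)| ≤ 1 := by
      rw [abs_le]; constructor <;> nlinarith [hα.1, hα.2]
    calc |b i + c * (α - f (b i)) - b i| = |c * (α - f (b i))| := by ring_nf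
      _ = c * |α - f (b i)| := by rw [abs_mul, abs_of_pos hc]
      _ ≤ c * 1 := by nlinarith
      _ = c := by ring
  set Mu : ℝ := max (b 0) (U + c) with hMu
  set Ml : ℝ := min (b 0) (L - c) with hMl
  have hub : ∀ i, b i ≤ Mu := by
    intro i
    induction i with
    | zero => exact le_max_left _ _
    | succ n ih =>
      rcases le_or_gt (b n) U with h | h
      · have := hstep n
        have : b (n + 1) ≤ b n + c := by
          have := abs_le.mp (hstep n); linarith [this.2]
        calc b (n + 1) ≤ b n + c := this
          _ ≤ U + c := by linarith
          _ ≤ Mu := le_max_right _ _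
      · have hf : α < f (b n) := lt_of_lt_of_le (hU U le_rfl) (hmono h.le)
        have : b (n + 1) ≤ b n := by
          rw [hiter n]; nlinarith
        linarith
  have hlb : ∀ i, Ml ≤ b i := by
    intro i
    induction i with
    | zero => exact min_le_left _ _
    | succ n ih =>
      rcases le_or_gt L (b n) with h | h
      · have : b n - c ≤ b (n + 1) := by
          have := abs_le.mp (hstep n); linarith [this.1]
        calc Ml ≤ L - c := min_le_right _ _
          _ ≤ b n - c := by linarith
          _ ≤ b (n + 1) := this
      · have hf : f (b n) < α := lt_of_le_of_lt (hmono h.le) (hL L le_rfl)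
        have : b n ≤ b (n + 1) := by
          rw [hiter n]; nlinarith
        linarith
  refine ⟨max |Mu| |Ml|, fun i => ?_⟩
  rw [abs_le]
  constructor
  · have : Ml ≤ b i := hlb i
    have h1 : -|Ml| ≤ Ml := neg_abs_le _
    have h2 : |Ml| ≤ max |Mu| |Ml| := le_max_right _ _
    linarith
  · have : b i ≤ Mu := hub i
    have h1 : Mu ≤ |Mu| := le_abs_self _
    have h2 : |Mu| ≤ max |Mu| |Ml| := le_max_left _ _
    linarith
end
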